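/- Let S be the set of symmetric matrix polynomials in P_m(ℂ^{n×n}) and let P ∈ S be regular. Let λ ∈ ℂ and x ∈ ℂⁿ with x^H x = 1, and set r := −P(λ)x and Λ_m := (1, λ, …, λ^m)ᵀ. Then η_F^S(λ, x, P) = sqrt(2‖r‖₂² − |xᵀr|²) / ‖Λ_m‖₂ ≤ √2 · η(λ, x, P). Moreover, defining ΔA_j := (conj(λ^j)/‖Λ_m‖₂²)·(x̄ rᵀ + r x^H − (rᵀx) x̄ x^H) for j = 0,…,m, the polynomial ΔP(z) := Σ_{j=0}^m z^j ΔA_j is the unique symmetric polynomial in P_m(ℂ^{n×n}) satisfying P(λ)x + ΔP(λ)x = 0 and |||ΔP|||_F = η_F^S(λ, x, P). -/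

import Mathlib

open scoped ComplexConjugate
open Matrix

noncomputable section

variable {ι : Type*} [Fintype ι] [DecidableEq ι]

/-- Evaluation of the matrix polynomial with coefficient list `A` at the point `z`. -/
def polyEval {m : ℕ} (A : Fin (m+1) → Matrix ι ι ℂ) (z : ℂ) : Matrix ι ι ℂ :=
  ∑ j : Fin (m+1), z ^ (j : ℕ) • A j

/-- Squared Euclidean norm of a complex vector. -/
def vecNormSq (x : ι → ℂ) : ℝ := ∑ i, ‖x i‖ ^ 2

/-- Euclidean norm of a complex vector. -/
def vecNorm (x : ι → ℂ) : ℝ := Real.sqrt (vecNormSq x)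

/-- `‖(1, z, …, z^m)‖₂²`. -/
def lamNormSq (m : ℕ) (z : ℂ) : ℝ := ∑ j : Fin (m+1), ‖z ^ (j : ℕ)‖ ^ 2

/-- Squared Frobenius norm of a matrix. -/
def frobNormSq (M : Matrix ι ι ℂ) : ℝ := ∑ i, ∑ k, ‖M i k‖ ^ 2

/-- Spectral (operator 2-) norm of a matrix. -/
def specNorm (M : Matrix ι ι ℂ) : ℝ := ‖Matrix.toEuclideanCLM (𝕜 := ℂ) M‖

/-- Frobenius norm of a matrix polynomial: `(Σ_j ‖A_j‖_F²)^{1/2}`. -/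
def polyNormF {m : ℕ} (A : Fin (m+1) → Matrix ι ι ℂ) : ℝ :=
  Real.sqrt (∑ j, frobNormSq (A j))

/-- Spectral norm of a matrix polynomial: `(Σ_j ‖A_j‖₂²)^{1/2}`. -/
def polyNorm2 {m : ℕ} (A : Fin (m+1) → Matrix ι ι ℂ) : ℝ :=
  Real.sqrt (∑ j, specNorm (A j) ^ 2)

/-- Structured backward error of `(lam, x)` as an approximate eigenpair of the matrix
polynomial `A`, with respect to the polynomial norm `N` and the structure class `S`. -/
def eta {m : ℕ} (N : (Fin (m+1) → Matrix ι ι ℂ) → ℝ)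
    (S : Set (Fin (m+1) → Matrix ι ι ℂ)) (lam : ℂ) (x : ι → ℂ)
    (A : Fin (m+1) → Matrix ι ι ℂ) : ℝ :=
  sInf {t | ∃ ΔA ∈ S, (polyEval A lam + polyEval ΔA lam) *ᵥ x = 0 ∧ t = N ΔA}

/-- A matrix polynomial is regular if `det P(z) ≠ 0` for some `z`. -/
def Regular {m : ℕ} (A : Fin (m+1) → Matrix ι ι ℂ) : Prop :=
  ∃ z : ℂ, (polyEval A z).det ≠ 0


/-- The class of symmetric matrix polynomials. -/
def SymPoly {ι : Type*} [Fintype ι] [DecidableEq ι] {m : ℕ} :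
    Set (Fin (m+1) → Matrix ι ι ℂ) := {B | ∀ j, (B j)ᵀ = B j}

set_option linter.unusedSectionVars false

def finner (M N : Matrix ι ι ℂ) : ℂ := ∑ i, ∑ k, conj (M i k) * N i k

lemma pt_pythag (z w : ℂ) : ‖z‖^2 = ‖w‖^2 + ‖z - w‖^2 + 2 * (conj w * (z - w)).re := by
  simp only [Complex.sq_norm, Complex.normSq_apply, Complex.mul_re,
    Complex.sub_re, Complex.sub_im, Complex.conj_re, Complex.conj_im]
  ring

lemma my_vecMulVec_mulVec {n : ℕ} (u v w : Fin n → ℂ) :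
    (vecMulVec u v) *ᵥ w = (v ⬝ᵥ w) • u := by
  ext i
  simp [mulVec, vecMulVec_apply, dotProduct, Finset.mul_sum, mul_assoc, mul_comm, mul_left_comm]

lemma finner_smul_left (c : ℂ) (M N : Matrix ι ι ℂ) :
    finner (c • M) N = conj c * finner M N := by
  simp [finner, Finset.mul_sum, mul_assoc]

lemma finner_smul_right (c : ℂ) (M N : Matrix ι ι ℂ) :
    finner M (c • N) = c * finner M N := by
  simp [finner, Finset.mul_sum, mul_assoc, mul_left_comm]

lemma finner_add_left (M N P : Matrix ι ι ℂ) :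
    finner (M + N) P = finner M P + finner N P := by
  simp [finner, add_mul, Finset.sum_add_distrib]

lemma finner_add_right (M N P : Matrix ι ι ℂ) :
    finner M (N + P) = finner M N + finner M P := by
  simp [finner, mul_add, Finset.sum_add_distrib]

lemma finner_sub_left (M N P : Matrix ι ι ℂ) :
    finner (M - N) P = finner M P - finner N P := by
  simp [finner, sub_mul, Finset.sum_sub_distrib]

lemma finner_sub_right (M N P : Matrix ι ι ℂ) :
    finner M (N - P) = finner M N - finner M P := by
  simp [finner, mul_sub, Finset.sum_sub_distrib]

lemma finner_sum_right {γ : Type*} (s : Finset γ) (M : Matrix ι ι ℂ) (N : γ → Matrix ι ι ℂ) :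
    finner M (∑ j ∈ s, N j) = ∑ j ∈ s, finner M (N j) := by
  simp only [finner, Finset.sum_apply, Matrix.sum_apply, Finset.mul_sum]
  calc (∑ i, ∑ k, ∑ j ∈ s, conj (M i k) * N j i k)
      = ∑ i, ∑ j ∈ s, ∑ k, conj (M i k) * N j i k :=
        Finset.sum_congr rfl fun i _ => Finset.sum_comm
    _ = ∑ j ∈ s, ∑ i, ∑ k, conj (M i k) * N j i k := Finset.sum_comm

lemma finner_vecMulVec_left {n : ℕ} (u v : Fin n → ℂ) (F : Matrix (Fin n) (Fin n) ℂ) :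
    finner (vecMulVec u v) F = star u ⬝ᵥ (F *ᵥ star v) := by
  simp only [finner, vecMulVec_apply, dotProduct, mulVec, Pi.star_apply,
    Finset.mul_sum, RCLike.star_def]
  exact Finset.sum_congr rfl fun i _ => Finset.sum_congr rfl fun k _ => by
    rw [_root_.map_mul]; ring

lemma finner_vecMulVec_vecMulVec {n : ℕ} (u v u' v' : Fin n → ℂ) :
    finner (vecMulVec u v) (vecMulVec u' v') = (star u ⬝ᵥ u') * (star v ⬝ᵥ v') := by
  simp only [finner, vecMulVec_apply, dotProduct, Pi.star_apply, RCLike.star_def,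
    Finset.sum_mul_sum]
  exact Finset.sum_congr rfl fun i _ => Finset.sum_congr rfl fun k _ => by
    rw [_root_.map_mul]; ring

lemma frobNormSq_nonneg (M : Matrix ι ι ℂ) : 0 ≤ frobNormSq M :=
  Finset.sum_nonneg fun _ _ => Finset.sum_nonneg fun _ _ => sq_nonneg _

lemma frobNormSq_smul (c : ℂ) (M : Matrix ι ι ℂ) :
    frobNormSq (c • M) = ‖c‖^2 * frobNormSq M := by
  simp [frobNormSq, norm_smul, mul_pow, Finset.mul_sum]

lemma frobNormSq_eq_zero {M : Matrix ι ι ℂ} (h : frobNormSq M = 0) : M = 0 := by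
  ext i k
  have h1 := (Finset.sum_eq_zero_iff_of_nonneg (fun i _ => Finset.sum_nonneg fun k _ => sq_nonneg ‖M i k‖)).mp h i (Finset.mem_univ i)
  have h2 := (Finset.sum_eq_zero_iff_of_nonneg (fun k _ => sq_nonneg ‖M i k‖)).mp h1 k (Finset.mem_univ k)
  simpa using pow_eq_zero_iff (n := 2) (by norm_num) |>.mp h2

lemma sum_frob_pythag {m n : ℕ} (a b : Fin (m+1) → Matrix (Fin n) (Fin n) ℂ)
    (h : (∑ j, finner (b j) (a j - b j)) = 0) :
    ∑ j, frobNormSq (a j) = ∑ j, frobNormSq (b j) + ∑ j, frobNormSq (a j - b j) := by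
  have key : ∀ j, frobNormSq (a j) = frobNormSq (b j) + frobNormSq (a j - b j)
      + 2 * (finner (b j) (a j - b j)).re := by
    intro j
    simp only [frobNormSq, finner, Matrix.sub_apply, Complex.re_sum, Finset.mul_sum,
      ← Finset.sum_add_distrib]
    exact Finset.sum_congr rfl fun i _ => Finset.sum_congr rfl fun k _ => pt_pythag _ _
  have hre : ∑ j, (finner (b j) (a j - b j)).re = 0 := by
    rw [← Complex.re_sum, h, Complex.zero_re]
  calc ∑ j, frobNormSq (a j)
      = ∑ j, (frobNormSq (b j) + frobNormSq (a j - b j) + 2 * (finner (b j) (a j - b j)).re) :=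
        Finset.sum_congr rfl fun j _ => key j
    _ = ∑ j, frobNormSq (b j) + ∑ j, frobNormSq (a j - b j) := by
        simp [Finset.sum_add_distrib, ← Finset.mul_sum, hre]

lemma my_vecMulVec_transpose {n : ℕ} (u v : Fin n → ℂ) :
    (vecMulVec u v)ᵀ = vecMulVec v u := by
  ext i k; simp [vecMulVec_apply, mul_comm]

lemma frobNormSq_eq_re_finner (M : Matrix ι ι ℂ) : frobNormSq M = (finner M M).re := by
  simp only [frobNormSq, finner, Complex.re_sum]
  refine Finset.sum_congr rfl fun i _ => Finset.sum_congr rfl fun k _ => ?_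
  rw [mul_comm, Complex.mul_conj, Complex.normSq_eq_norm_sq]
  norm_cast

lemma frobNormSq_vecMulVec {n : ℕ} (u v : Fin n → ℂ) :
    frobNormSq (vecMulVec u v) = vecNormSq u * vecNormSq v := by
  simp only [frobNormSq, vecNormSq, vecMulVec_apply, norm_mul, mul_pow, Finset.sum_mul_sum]

lemma vecNormSq_nonneg {n : ℕ} (u : Fin n → ℂ) : 0 ≤ vecNormSq u :=
  Finset.sum_nonneg fun _ _ => sq_nonneg _

lemma vecNormSq_star {n : ℕ} (u : Fin n → ℂ) : vecNormSq (star u) = vecNormSq u := by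
  simp [vecNormSq]

/-- Structured backward error of an approximate eigenpair of a symmetric
matrix polynomial, Frobenius norm: explicit formula, bound by `√2·η`, and the unique
minimal symmetric perturbation. -/
theorem symmetric_backward_error_frobenius {n m : ℕ}
    (A : Fin (m+1) → Matrix (Fin n) (Fin n) ℂ)
    (hA : A ∈ SymPoly) (hreg : Regular A)
    (lam : ℂ) (x : Fin n → ℂ) (hx : star x ⬝ᵥ x = 1)
    (r : Fin n → ℂ) (hr : r = -(polyEval A lam *ᵥ x))
    (ΔA : Fin (m+1) → Matrix (Fin n) (Fin n) ℂ)
    (hΔ : ∀ j : Fin (m+1),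
      ΔA j = (conj (lam ^ (j : ℕ)) / (lamNormSq m lam : ℂ)) •
        (vecMulVec (star x) r + vecMulVec r (star x)
          - (r ⬝ᵥ x) • vecMulVec (star x) (star x))) :
    eta polyNormF SymPoly lam x A
      = Real.sqrt (2 * vecNormSq r - ‖x ⬝ᵥ r‖ ^ 2) / Real.sqrt (lamNormSq m lam) ∧
    eta polyNormF SymPoly lam x A ≤ Real.sqrt 2 * eta polyNormF Set.univ lam x A ∧
    ΔA ∈ SymPoly ∧
    (polyEval A lam + polyEval ΔA lam) *ᵥ x = 0 ∧
    polyNormF ΔA = eta polyNormF SymPoly lam x A ∧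
    (∀ ΔB ∈ SymPoly, (polyEval A lam + polyEval ΔB lam) *ᵥ x = 0 →
      polyNormF ΔB = eta polyNormF SymPoly lam x A → ΔB = ΔA) := by
  classical
  set L : ℝ := lamNormSq m lam with hLdef
  have hL1 : (1:ℝ) ≤ L := by
    have h0 := Finset.single_le_sum (f := fun j : Fin (m+1) => ‖lam ^ (j:ℕ)‖^2)
      (fun j _ => sq_nonneg _) (Finset.mem_univ (0 : Fin (m+1)))
    simpa [hLdef, lamNormSq] using h0
  have hLpos : 0 < L := lt_of_lt_of_le one_pos hL1
  have hLne : (L:ℂ) ≠ 0 := by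
    simpa using Complex.ofReal_ne_zero.mpr (ne_of_gt hLpos)
  set α : ℂ := r ⬝ᵥ x with hαdef
  have hαc : x ⬝ᵥ r = α := dotProduct_comm x r
  set E₀ : Matrix (Fin n) (Fin n) ℂ :=
    vecMulVec (star x) r + vecMulVec r (star x) - α • vecMulVec (star x) (star x) with hE0def
  have hxx' : x ⬝ᵥ star x = 1 := by rw [dotProduct_comm]; exact hx
  have hE0x : E₀ *ᵥ x = r := by
    rw [hE0def, Matrix.sub_mulVec, Matrix.add_mulVec, Matrix.smul_mulVec,
      my_vecMulVec_mulVec, my_vecMulVec_mulVec, my_vecMulVec_mulVec, hx, ← hαdef]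
    simp
  have hE0sym : E₀ᵀ = E₀ := by
    rw [hE0def, Matrix.transpose_sub, Matrix.transpose_add, Matrix.transpose_smul,
      my_vecMulVec_transpose, my_vecMulVec_transpose, my_vecMulVec_transpose]
    rw [add_comm]
  have hsum : (∑ j : Fin (m+1), lam ^ (j:ℕ) * conj (lam ^ (j:ℕ))) = (L:ℂ) := by
    rw [hLdef]
    unfold lamNormSq
    push_cast
    refine Finset.sum_congr rfl fun j _ => ?_
    rw [Complex.mul_conj, Complex.normSq_eq_norm_sq]
    push_cast
    ring
  have hEval1 : ∀ M : Matrix (Fin n) (Fin n) ℂ,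
      (∑ j : Fin (m+1), lam ^ (j:ℕ) • ((conj (lam ^ (j:ℕ)) / (L:ℂ)) • M)) = M := by
    intro M
    have : ∀ j : Fin (m+1), lam ^ (j:ℕ) • ((conj (lam ^ (j:ℕ)) / (L:ℂ)) • M)
        = (lam ^ (j:ℕ) * conj (lam ^ (j:ℕ)) / (L:ℂ)) • M := by
      intro j; rw [smul_smul, mul_div_assoc]
    rw [Finset.sum_congr rfl fun j _ => this j, ← Finset.sum_smul, ← Finset.sum_div, hsum,
      div_self hLne, one_smul]
  have hEvalΔA : polyEval ΔA lam = E₀ := by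
    unfold polyEval
    rw [Finset.sum_congr rfl fun j _ => by rw [hΔ j]]
    exact hEval1 E₀
  have hfrobscale : ∀ M : Matrix (Fin n) (Fin n) ℂ,
      (∑ j : Fin (m+1), frobNormSq ((conj (lam ^ (j:ℕ)) / (L:ℂ)) • M)) = frobNormSq M / L := by
    intro M
    have : ∀ j : Fin (m+1), frobNormSq ((conj (lam ^ (j:ℕ)) / (L:ℂ)) • M)
        = ‖lam ^ (j:ℕ)‖^2 / L^2 * frobNormSq M := by
      intro j
      rw [frobNormSq_smul]
      congr 1
      rw [norm_div, RCLike.norm_conj, Complex.norm_real, Real.norm_eq_abs,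
        abs_of_pos hLpos, div_pow]
    rw [Finset.sum_congr rfl fun j _ => this j, ← Finset.sum_mul, ← Finset.sum_div,
      show (∑ j : Fin (m+1), ‖lam ^ (j:ℕ)‖^2) = L from rfl]
    have hLne' : L ≠ 0 := ne_of_gt hLpos
    field_simp
  -- orthogonality
  have hxF : ∀ F : Matrix (Fin n) (Fin n) ℂ, Fᵀ = F → F *ᵥ x = 0 →
      ∀ w : Fin n → ℂ, x ⬝ᵥ (F *ᵥ w) = 0 := by
    intro F hFs hFx w
    rw [dotProduct_mulVec]
    have : x ᵥ* F = 0 := by rw [← hFs, vecMul_transpose, hFx]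
    rw [this, zero_dotProduct]
  have horthE0 : ∀ F : Matrix (Fin n) (Fin n) ℂ, Fᵀ = F → F *ᵥ x = 0 →
      finner E₀ F = 0 := by
    intro F hFs hFx
    rw [hE0def, finner_sub_left, finner_add_left, finner_smul_left,
      finner_vecMulVec_left, finner_vecMulVec_left, finner_vecMulVec_left, star_star]
    rw [hxF F hFs hFx (star r), hxF F hFs hFx x, hFx, dotProduct_zero]
    ring
  have horthG : ∀ F : Matrix (Fin n) (Fin n) ℂ, F *ᵥ x = 0 →
      finner (vecMulVec r (star x)) F = 0 := by
    intro F hFx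
    rw [finner_vecMulVec_left, star_star, hFx, dotProduct_zero]
  -- master identities
  have hmaster : ∀ ΔB : Fin (m+1) → Matrix (Fin n) (Fin n) ℂ,
      (∀ j, ((ΔB j)ᵀ = ΔB j)) → polyEval ΔB lam *ᵥ x = r →
      ∑ j, frobNormSq (ΔB j) = ∑ j, frobNormSq (ΔA j) + ∑ j, frobNormSq (ΔB j - ΔA j) := by
    intro ΔB hBs hBx
    apply sum_frob_pythag
    have hFs : (polyEval ΔB lam - E₀)ᵀ = polyEval ΔB lam - E₀ := by
      rw [Matrix.transpose_sub, hE0sym]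
      congr 1
      unfold polyEval
      rw [Matrix.transpose_sum]
      exact Finset.sum_congr rfl fun j _ => by rw [Matrix.transpose_smul, hBs j]
    have hFx : (polyEval ΔB lam - E₀) *ᵥ x = 0 := by
      rw [Matrix.sub_mulVec, hBx, hE0x, sub_self]
    have step : ∀ j : Fin (m+1), finner (ΔA j) (ΔB j - ΔA j)
        = lam ^ (j:ℕ) / (L:ℂ) * finner E₀ (ΔB j - ΔA j) := by
      intro j
      rw [hΔ j, finner_smul_left, map_div₀, Complex.conj_conj, Complex.conj_ofReal]
    rw [Finset.sum_congr rfl fun j _ => step j]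
    have step2 : ∑ j : Fin (m+1), lam ^ (j:ℕ) / (L:ℂ) * finner E₀ (ΔB j - ΔA j)
        = finner E₀ (∑ j : Fin (m+1), lam ^ (j:ℕ) • (ΔB j - ΔA j)) / L := by
      rw [finner_sum_right, Finset.sum_div]
      exact Finset.sum_congr rfl fun j _ => by rw [finner_smul_right]; ring
    rw [step2]
    have step3 : (∑ j : Fin (m+1), lam ^ (j:ℕ) • (ΔB j - ΔA j))
        = polyEval ΔB lam - E₀ := by
      simp only [smul_sub, Finset.sum_sub_distrib]
      rw [show (∑ j : Fin (m+1), lam ^ (j:ℕ) • ΔB j) = polyEval ΔB lam from rfl, ← hEvalΔA]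
      rfl
    rw [step3, horthE0 _ hFs hFx, zero_div]
  -- frobenius norm of E₀
  have hre1 : ((vecNormSq x : ℝ) : ℂ) = 1 := by
    rw [← hx]
    unfold vecNormSq
    push_cast
    simp only [dotProduct, Pi.star_apply, RCLike.star_def]
    refine Finset.sum_congr rfl fun i _ => ?_
    rw [mul_comm, Complex.mul_conj, Complex.normSq_eq_norm_sq]
    norm_cast
  have hxnorm : vecNormSq x = 1 := by exact_mod_cast hre1
  have hsrr : star r ⬝ᵥ r = ((vecNormSq r : ℝ) : ℂ) := by
    unfold vecNormSq
    push_cast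
    simp only [dotProduct, Pi.star_apply, RCLike.star_def]
    refine Finset.sum_congr rfl fun i _ => ?_
    rw [mul_comm, Complex.mul_conj, Complex.normSq_eq_norm_sq]
    norm_cast
  have hsrx : star r ⬝ᵥ star x = conj α := by
    rw [hαdef]
    simp only [dotProduct, Pi.star_apply, RCLike.star_def, map_sum, _root_.map_mul]
  have hfrobE0 : frobNormSq E₀ = 2 * vecNormSq r - ‖x ⬝ᵥ r‖^2 := by
    have hnormα : ((‖x ⬝ᵥ r‖^2 : ℝ) : ℂ) = α * conj α := by
      rw [hαc, Complex.mul_conj, Complex.normSq_eq_norm_sq]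
    have h2 : finner E₀ E₀ = ((2 * vecNormSq r - ‖x ⬝ᵥ r‖^2 : ℝ) : ℂ) := by
      rw [hE0def]
      simp only [finner_sub_left, finner_sub_right, finner_add_left, finner_add_right,
        finner_smul_left, finner_smul_right, finner_vecMulVec_vecMulVec, star_star]
      rw [Complex.ofReal_sub, Complex.ofReal_mul, hnormα, hxx', hαc, hsrx, hsrr]
      push_cast
      ring
    rw [frobNormSq_eq_re_finner, h2, Complex.ofReal_re]
  have hfrobA : ∑ j, frobNormSq (ΔA j) = (2 * vecNormSq r - ‖x ⬝ᵥ r‖^2) / L := by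
    rw [Finset.sum_congr rfl fun j _ => by rw [hΔ j], hfrobscale, hfrobE0]
  -- constraint translation
  have hPx : polyEval A lam *ᵥ x = -r := by rw [hr, neg_neg]
  have hcon : ∀ ΔB : Fin (m+1) → Matrix (Fin n) (Fin n) ℂ,
      ((polyEval A lam + polyEval ΔB lam) *ᵥ x = 0 ↔ polyEval ΔB lam *ᵥ x = r) := by
    intro ΔB
    rw [Matrix.add_mulVec, hPx, neg_add_eq_zero]
    exact ⟨fun h => h.symm, fun h => h.symm⟩
  -- ΔA properties
  have hAsym : ΔA ∈ SymPoly := by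
    intro j
    rw [hΔ j, Matrix.transpose_smul, hE0sym]
  have hAcon : (polyEval A lam + polyEval ΔA lam) *ᵥ x = 0 :=
    (hcon ΔA).mpr (by rw [hEvalΔA, hE0x])
  -- eta value
  have hlb : ∀ t ∈ {t | ∃ ΔB ∈ (SymPoly : Set (Fin (m+1) → Matrix (Fin n) (Fin n) ℂ)),
      (polyEval A lam + polyEval ΔB lam) *ᵥ x = 0 ∧ t = polyNormF ΔB}, polyNormF ΔA ≤ t := by
    rintro t ⟨ΔB, hBs, hBc, rfl⟩
    have hid := hmaster ΔB hBs ((hcon ΔB).mp hBc)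
    unfold polyNormF
    apply Real.sqrt_le_sqrt
    rw [hid]
    have : 0 ≤ ∑ j, frobNormSq (ΔB j - ΔA j) :=
      Finset.sum_nonneg fun j _ => frobNormSq_nonneg _
    linarith
  have hmem : polyNormF ΔA ∈ {t | ∃ ΔB ∈ (SymPoly : Set (Fin (m+1) → Matrix (Fin n) (Fin n) ℂ)),
      (polyEval A lam + polyEval ΔB lam) *ᵥ x = 0 ∧ t = polyNormF ΔB} := ⟨ΔA, hAsym, hAcon, rfl⟩
  have heta : eta polyNormF SymPoly lam x A = polyNormF ΔA := by
    unfold eta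
    exact le_antisymm (csInf_le ⟨polyNormF ΔA, hlb⟩ hmem) (le_csInf ⟨_, hmem⟩ hlb)
  have hANval : polyNormF ΔA
      = Real.sqrt (2 * vecNormSq r - ‖x ⬝ᵥ r‖ ^ 2) / Real.sqrt L := by
    unfold polyNormF
    rw [hfrobA, ← hfrobE0, Real.sqrt_div (frobNormSq_nonneg E₀), hfrobE0]
  have hetaval : eta polyNormF SymPoly lam x A
      = Real.sqrt (2 * vecNormSq r - ‖x ⬝ᵥ r‖ ^ 2) / Real.sqrt L := by
    rw [heta, hANval]
  refine ⟨hetaval, ?_, hAsym, hAcon, heta.symm, ?_⟩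
  · -- √2 bound
    have hfrobG : frobNormSq (vecMulVec r (star x)) = vecNormSq r := by
      rw [frobNormSq_vecMulVec, vecNormSq_star, hxnorm, mul_one]
    have hGx : vecMulVec r (star x) *ᵥ x = r := by
      rw [my_vecMulVec_mulVec, hx, one_smul]
    have hUlb : ∀ t ∈ {t | ∃ ΔB ∈ (Set.univ : Set (Fin (m+1) → Matrix (Fin n) (Fin n) ℂ)),
        (polyEval A lam + polyEval ΔB lam) *ᵥ x = 0 ∧ t = polyNormF ΔB},
        Real.sqrt (vecNormSq r / L) ≤ t := by
      rintro t ⟨ΔB, -, hBc, rfl⟩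
      have hBx : polyEval ΔB lam *ᵥ x = r := (hcon ΔB).mp hBc
      set ΔC : Fin (m+1) → Matrix (Fin n) (Fin n) ℂ :=
        fun j => (conj (lam ^ (j:ℕ)) / (L:ℂ)) • vecMulVec r (star x) with hΔC
      have hEvalC : polyEval ΔC lam = vecMulVec r (star x) := hEval1 _
      have hFx : (polyEval ΔB lam - vecMulVec r (star x)) *ᵥ x = 0 := by
        rw [Matrix.sub_mulVec, hBx, hGx, sub_self]
      have hpyth : ∑ j, frobNormSq (ΔB j)
          = ∑ j, frobNormSq (ΔC j) + ∑ j, frobNormSq (ΔB j - ΔC j) := by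
        apply sum_frob_pythag
        have step : ∀ j : Fin (m+1), finner (ΔC j) (ΔB j - ΔC j)
            = lam ^ (j:ℕ) / (L:ℂ) * finner (vecMulVec r (star x)) (ΔB j - ΔC j) := by
          intro j
          rw [hΔC, finner_smul_left, map_div₀, Complex.conj_conj, Complex.conj_ofReal]
        rw [Finset.sum_congr rfl fun j _ => step j]
        have step2 : ∑ j : Fin (m+1), lam ^ (j:ℕ) / (L:ℂ)
              * finner (vecMulVec r (star x)) (ΔB j - ΔC j)
            = finner (vecMulVec r (star x)) (∑ j : Fin (m+1), lam ^ (j:ℕ) • (ΔB j - ΔC j)) / L := by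
          rw [finner_sum_right, Finset.sum_div]
          exact Finset.sum_congr rfl fun j _ => by rw [finner_smul_right]; ring
        rw [step2]
        have step3 : (∑ j : Fin (m+1), lam ^ (j:ℕ) • (ΔB j - ΔC j))
            = polyEval ΔB lam - vecMulVec r (star x) := by
          simp only [smul_sub, Finset.sum_sub_distrib]
          rw [show (∑ j : Fin (m+1), lam ^ (j:ℕ) • ΔB j) = polyEval ΔB lam from rfl, ← hEvalC]
          rfl
        rw [step3, horthG _ hFx, zero_div]
      have hCval : ∑ j, frobNormSq (ΔC j) = vecNormSq r / L := by
        rw [hΔC]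
        rw [hfrobscale, hfrobG]
      unfold polyNormF
      apply Real.sqrt_le_sqrt
      rw [hpyth, hCval]
      have : 0 ≤ ∑ j, frobNormSq (ΔB j - ΔC j) :=
        Finset.sum_nonneg fun j _ => frobNormSq_nonneg _
      linarith
    have hUmem : polyNormF ΔA ∈ {t | ∃ ΔB ∈ (Set.univ : Set (Fin (m+1) → Matrix (Fin n) (Fin n) ℂ)),
        (polyEval A lam + polyEval ΔB lam) *ᵥ x = 0 ∧ t = polyNormF ΔB} :=
      ⟨ΔA, Set.mem_univ _, hAcon, rfl⟩
    have hU : Real.sqrt (vecNormSq r / L) ≤ eta polyNormF Set.univ lam x A := by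
      unfold eta
      exact le_csInf ⟨_, hUmem⟩ hUlb
    rw [hetaval]
    calc Real.sqrt (2 * vecNormSq r - ‖x ⬝ᵥ r‖ ^ 2) / Real.sqrt L
        ≤ Real.sqrt (2 * vecNormSq r) / Real.sqrt L := by
          have h1 : Real.sqrt (2 * vecNormSq r - ‖x ⬝ᵥ r‖ ^ 2) ≤ Real.sqrt (2 * vecNormSq r) :=
            Real.sqrt_le_sqrt (by nlinarith [sq_nonneg ‖x ⬝ᵥ r‖])
          exact (div_le_div_iff_of_pos_right (Real.sqrt_pos.mpr hLpos)).mpr h1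
      _ = Real.sqrt 2 * Real.sqrt (vecNormSq r / L) := by
          rw [Real.sqrt_mul (by norm_num : (0:ℝ) ≤ 2),
            Real.sqrt_div (vecNormSq_nonneg r), mul_div_assoc]
      _ ≤ Real.sqrt 2 * eta polyNormF Set.univ lam x A := by
          exact mul_le_mul_of_nonneg_left hU (Real.sqrt_nonneg 2)
  · -- uniqueness
    intro ΔB hBs hBc hBn
    have hid := hmaster ΔB hBs ((hcon ΔB).mp hBc)
    have hSB : ∑ j, frobNormSq (ΔB j) = ∑ j, frobNormSq (ΔA j) := by
      have h1 : Real.sqrt (∑ j, frobNormSq (ΔB j)) = Real.sqrt (∑ j, frobNormSq (ΔA j)) := by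
        have := hBn.trans heta
        unfold polyNormF at this
        exact this
      have hnn1 : 0 ≤ ∑ j, frobNormSq (ΔB j) :=
        Finset.sum_nonneg fun j _ => frobNormSq_nonneg _
      have hnn2 : 0 ≤ ∑ j, frobNormSq (ΔA j) :=
        Finset.sum_nonneg fun j _ => frobNormSq_nonneg _
      calc ∑ j, frobNormSq (ΔB j) = Real.sqrt (∑ j, frobNormSq (ΔB j)) ^ 2 :=
            (Real.sq_sqrt hnn1).symm
        _ = Real.sqrt (∑ j, frobNormSq (ΔA j)) ^ 2 := by rw [h1]
        _ = ∑ j, frobNormSq (ΔA j) := Real.sq_sqrt hnn2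
    have hzero : ∑ j, frobNormSq (ΔB j - ΔA j) = 0 := by linarith [hid, hSB]
    funext j
    have hj : frobNormSq (ΔB j - ΔA j) = 0 :=
      (Finset.sum_eq_zero_iff_of_nonneg (fun j _ => frobNormSq_nonneg _)).mp hzero j
        (Finset.mem_univ j)
    have := frobNormSq_eq_zero hj
    exact sub_eq_zero.mp this
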